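/- Fix a = 1/40 and b > 0. Let μ be a finite Borel measure and Q a square such that Q is not (a,b)-balanced with respect to μ (i.e., there do not exist two subsquares Q₁, Q₂ ⊂ Q with dist(Q₁,Q₂) ≥ a·ℓ(Q), ℓ(Qᵢ) ≤ (a/10)ℓ(Q), and μ(Qᵢ) ≥ b·μ(Q) for i = 1,2). Then there exists a square P ⊂ Q with ℓ(P) ≤ ℓ(Q)/10 such that μ(P) ≥ (1 − 2·10⁵·b)·μ(Q). -/

import Mathlib

set_option maxRecDepth 10000
set_option maxHeartbeats 2000000

open MeasureTheory

/-- The closed axis-parallel square with center `c` and side length `l`. -/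
def square (c : ℂ) (l : ℝ) : Set ℂ := {z | |z.re - c.re| ≤ l / 2 ∧ |z.im - c.im| ≤ l / 2}

/-- The square with center `c` and side `l` is `(a,b)`-balanced with respect to `μ`:
there are two squares `Q₁, Q₂ ⊆ Q` with `dist(Q₁,Q₂) ≥ a·ℓ(Q)`, `ℓ(Qᵢ) ≤ (a/10)·ℓ(Q)`
and `μ(Qᵢ) ≥ b·μ(Q)` for `i = 1, 2`. -/
def IsBalanced (μ : Measure ℂ) (a b : ℝ) (c : ℂ) (l : ℝ) : Prop :=
  ∃ (c₁ : ℂ) (l₁ : ℝ) (c₂ : ℂ) (l₂ : ℝ),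
    square c₁ l₁ ⊆ square c l ∧ square c₂ l₂ ⊆ square c l ∧
    (∀ p ∈ square c₁ l₁, ∀ q ∈ square c₂ l₂, a * l ≤ dist p q) ∧
    l₁ ≤ a / 10 * l ∧ l₂ ≤ a / 10 * l ∧
    ENNReal.ofReal b * μ (square c l) ≤ μ (square c₁ l₁) ∧
    ENNReal.ofReal b * μ (square c l) ≤ μ (square c₂ l₂)

lemma abs_re_sub_le_dist' (p q : ℂ) : |p.re - q.re| ≤ dist p q := by
  rw [Complex.dist_eq]
  simpa using Complex.abs_re_le_norm (p - q)

lemma abs_im_sub_le_dist' (p q : ℂ) : |p.im - q.im| ≤ dist p q := by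
  rw [Complex.dist_eq]
  simpa using Complex.abs_im_le_norm (p - q)

lemma grid1 (l cr x : ℝ) (hl : 0 < l) (hx : |x - cr| ≤ l / 2) :
    ∃ i : Fin 400, |x - (cr - l / 2 + ((i : ℝ) + 1 / 2) * (l / 400))| ≤ l / 800 := by
  rw [abs_le] at hx
  obtain ⟨s, hs⟩ : ∃ s, s = l / 400 := ⟨_, rfl⟩
  have hs0 : 0 < s := by rw [hs]; positivity
  obtain ⟨t, ht⟩ : ∃ t, t = x - cr + l / 2 := ⟨_, rfl⟩
  have ht0 : 0 ≤ t := by rw [ht]; linarith [hx.1]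
  have htl : t ≤ 400 * s := by rw [ht, hs]; linarith [hx.2]
  rcases lt_or_ge t (400 * s) with hc | hc
  · have h1 : (0 : ℤ) ≤ ⌊t / s⌋ := Int.floor_nonneg.2 (by positivity)
    set n : ℕ := ⌊t / s⌋.toNat with hn
    have hnn : (n : ℤ) = ⌊t / s⌋ := Int.toNat_of_nonneg h1
    have h2 : ⌊t / s⌋ < 400 := by
      have : t / s < 400 := by rw [div_lt_iff₀ hs0]; linarith
      exact Int.floor_lt.2 (by exact_mod_cast this)
    have hn400 : n < 400 := by omega
    have hlo : (n : ℝ) * s ≤ t := by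
      have := Int.floor_le (t / s)
      rw [← hnn] at this
      have : (n : ℝ) ≤ t / s := by exact_mod_cast this
      calc (n : ℝ) * s ≤ (t / s) * s := by nlinarith
        _ = t := by field_simp
    have hhi : t ≤ ((n : ℝ) + 1) * s := by
      have := (Int.lt_floor_add_one (t / s)).le
      rw [← hnn] at this
      have h' : t / s ≤ (n : ℝ) + 1 := by exact_mod_cast this
      calc t = (t / s) * s := by field_simp
        _ ≤ ((n : ℝ) + 1) * s := by nlinarith
    refine ⟨⟨n, hn400⟩, ?_⟩
    have he : x - (cr - l / 2 + ((n : ℝ) + 1 / 2) * s) = t - ((n : ℝ) + 1 / 2) * s := by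
      rw [ht]; ring
    rw [abs_le]
    constructor <;> simp only [Fin.val_mk] <;> rw [← hs, he] <;> [nlinarith; nlinarith]
  · refine ⟨⟨399, by norm_num⟩, ?_⟩
    have heq : t = 400 * s := le_antisymm htl hc
    have he : x - (cr - l / 2 + ((399 : ℝ) + 1 / 2) * s) = t - (399 + 1 / 2) * s := by
      rw [ht]; ring
    rw [abs_le]
    constructor <;> simp only [Fin.val_mk] <;> push_cast <;> rw [← hs, he, heq] <;> linarith

lemma clamp1 (l c0 cr x : ℝ) (hl : 0 < l) (h1 : |x - c0| ≤ 23 / 800 * l)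
    (h2 : |x - cr| ≤ l / 2) :
    |x - max (cr - l / 2 + l / 20) (min c0 (cr + l / 2 - l / 20))| ≤ l / 20 := by
  rw [abs_le] at *
  rcases min_cases c0 (cr + l / 2 - l / 20) with ⟨he2, hle2⟩ | ⟨he2, hle2⟩ <;>
    rw [he2] <;>
    rcases max_cases (cr - l / 2 + l / 20) c0 with ⟨he, hle⟩ | ⟨he, hle⟩ <;>
    try rw [he]
  all_goals try (constructor <;> linarith)
  all_goals (rcases max_cases (cr - l / 2 + l / 20) (cr + l / 2 - l / 20) with ⟨he3, hle3⟩ | ⟨he3, hle3⟩ <;> rw [he3] <;> constructor <;> linarith)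

lemma clamp2 (l cr c0 x : ℝ) (hl : 0 < l)
    (h : |x - max (cr - l / 2 + l / 20) (min c0 (cr + l / 2 - l / 20))| ≤ l / 20) :
    |x - cr| ≤ l / 2 := by
  have hm1 : cr - l / 2 + l / 20 ≤ max (cr - l / 2 + l / 20) (min c0 (cr + l / 2 - l / 20)) :=
    le_max_left _ _
  have hm2 : max (cr - l / 2 + l / 20) (min c0 (cr + l / 2 - l / 20)) ≤ cr + l / 2 - l / 20 :=
    max_le (by linarith) (min_le_right _ _)
  rw [abs_le] at *
  constructor <;> linarith [h.1, h.2]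

lemma cancelE (μQ μP : ENNReal) (b : ℝ) (hb : 0 < b) (hb2 : 0 < 1 - 2 * 10 ^ 5 * b)
    (hfin : μQ ≠ ⊤)
    (h : μQ ≤ μP + ENNReal.ofReal (160000 * b) * μQ) :
    ENNReal.ofReal (1 - 2 * 10 ^ 5 * b) * μQ ≤ μP := by
  have hfin2 : ENNReal.ofReal (160000 * b) * μQ ≠ ⊤ :=
    ENNReal.mul_ne_top ENNReal.ofReal_ne_top hfin
  rw [← ENNReal.add_le_add_iff_right hfin2]
  calc ENNReal.ofReal (1 - 2 * 10 ^ 5 * b) * μQ + ENNReal.ofReal (160000 * b) * μQ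
      = ENNReal.ofReal ((1 - 2 * 10 ^ 5 * b) + 160000 * b) * μQ := by
        rw [ENNReal.ofReal_add hb2.le (by positivity), add_mul]
    _ ≤ 1 * μQ := by
        gcongr
        exact ENNReal.ofReal_le_one.2 (by linarith)
    _ = μQ := one_mul _
    _ ≤ μP + ENNReal.ofReal (160000 * b) * μQ := h

theorem stmt6 (μ : Measure ℂ) [IsFiniteMeasure μ] (b : ℝ) (hb : 0 < b)
    (c : ℂ) (l : ℝ) (hl : 0 < l)
    (h : ¬ IsBalanced μ (1 / 40) b c l) :
    ∃ (p : ℂ) (lp : ℝ), square p lp ⊆ square c l ∧ lp ≤ l / 10 ∧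
      ENNReal.ofReal (1 - 2 * 10 ^ 5 * b) * μ (square c l) ≤ μ (square p lp) := by
  classical
  have htriv : square c (l / 10) ⊆ square c l := by
    intro z hz
    obtain ⟨h1, h2⟩ := hz
    exact ⟨by rw [abs_le] at h1 ⊢; constructor <;> linarith [h1.1, h1.2],
           by rw [abs_le] at h2 ⊢; constructor <;> linarith [h2.1, h2.2]⟩
  by_cases hb2 : 1 - 2 * 10 ^ 5 * b ≤ 0
  · exact ⟨c, l / 10, htriv, le_refl _, by
      rw [ENNReal.ofReal_eq_zero.2 hb2, zero_mul]; exact zero_le⟩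
  push_neg at hb2
  -- grid of 400 × 400 squares of side l/400
  obtain ⟨ctr, hctr_re, hctr_im⟩ :
      ∃ f : Fin 400 × Fin 400 → ℂ,
        (∀ ij, (f ij).re = c.re - l / 2 + ((ij.1 : ℝ) + 1 / 2) * (l / 400)) ∧
        (∀ ij, (f ij).im = c.im - l / 2 + ((ij.2 : ℝ) + 1 / 2) * (l / 400)) :=
    ⟨fun ij => ⟨c.re - l / 2 + ((ij.1 : ℝ) + 1 / 2) * (l / 400),
      c.im - l / 2 + ((ij.2 : ℝ) + 1 / 2) * (l / 400)⟩, fun _ => rfl, fun _ => rfl⟩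
  have hsub : ∀ ij, square (ctr ij) (l / 400) ⊆ square c l := by
    intro ij z hz
    obtain ⟨h1, h2⟩ := hz
    rw [hctr_re] at h1
    rw [hctr_im] at h2
    rw [abs_le] at h1 h2
    have i1 : (0 : ℝ) ≤ (ij.1 : ℝ) := Nat.cast_nonneg _
    have i2 : (ij.1 : ℝ) ≤ 399 := by exact_mod_cast Nat.lt_succ_iff.mp ij.1.isLt
    have j1 : (0 : ℝ) ≤ (ij.2 : ℝ) := Nat.cast_nonneg _
    have j2 : (ij.2 : ℝ) ≤ 399 := by exact_mod_cast Nat.lt_succ_iff.mp ij.2.isLt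
    constructor <;> rw [abs_le] <;> constructor
    · nlinarith [h1.1, mul_nonneg i1 hl.le]
    · nlinarith [h1.2, mul_le_mul_of_nonneg_right i2 hl.le]
    · nlinarith [h2.1, mul_nonneg j1 hl.le]
    · nlinarith [h2.2, mul_le_mul_of_nonneg_right j2 hl.le]
  have hcov : ∀ z ∈ square c l, ∃ ij, z ∈ square (ctr ij) (l / 400) := by
    intro z hz
    obtain ⟨i, hi⟩ := grid1 l c.re z.re hl hz.1
    obtain ⟨j, hj⟩ := grid1 l c.im z.im hl hz.2
    refine ⟨(i, j), ?_, ?_⟩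
    · rw [hctr_re]; show |z.re - _| ≤ l / 400 / 2; linarith [hi]
    · rw [hctr_im]; show |z.im - _| ≤ l / 400 / 2; linarith [hj]
  obtain ⟨HeavyP, hHeavyP⟩ : ∃ P : Fin 400 × Fin 400 → Prop, ∀ ij, P ij ↔
      ENNReal.ofReal b * μ (square c l) ≤ μ (square (ctr ij) (l / 400)) :=
    ⟨_, fun _ => Iff.rfl⟩
  have hlight : μ (⋃ ij ∈ (Finset.univ.filter fun ij => ¬ HeavyP ij), square (ctr ij) (l / 400)) ≤
      ENNReal.ofReal (160000 * b) * μ (square c l) := by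
    calc μ (⋃ ij ∈ (Finset.univ.filter fun ij => ¬ HeavyP ij), square (ctr ij) (l / 400))
        ≤ ∑ ij ∈ (Finset.univ.filter fun ij => ¬ HeavyP ij), μ (square (ctr ij) (l / 400)) := measure_biUnion_finset_le _ _
      _ ≤ (Finset.univ.filter fun ij => ¬ HeavyP ij).card • (ENNReal.ofReal b * μ (square c l)) := by
          refine Finset.sum_le_card_nsmul _ _ _ ?_
          intro ij hij
          have := (Finset.mem_filter.mp hij).2
          exact (lt_of_not_ge fun hc => this ((hHeavyP ij).mpr hc)).le
      _ = ((Finset.univ.filter fun ij => ¬ HeavyP ij).card : ENNReal) * (ENNReal.ofReal b * μ (square c l)) := nsmul_eq_mul _ _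
      _ ≤ (160000 : ENNReal) * (ENNReal.ofReal b * μ (square c l)) := by
          gcongr
          have hcard : (Finset.univ.filter fun ij => ¬ HeavyP ij).card ≤ 160000 := by
            refine le_trans (Finset.card_filter_le _ _) ?_
            rw [Finset.card_univ, Fintype.card_prod, Fintype.card_fin]
          exact_mod_cast hcard
      _ = ENNReal.ofReal (160000 * b) * μ (square c l) := by
          rw [ENNReal.ofReal_mul (by norm_num : (0:ℝ) ≤ 160000), ← mul_assoc]
          norm_num
  by_cases hH : ∃ ij₀, HeavyP ij₀
  · obtain ⟨ij₀, hij₀⟩ := hH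
    -- centers of heavy squares are close to ctr ij₀
    have hdist : ∀ ij, HeavyP ij →
        |(ctr ij).re - (ctr ij₀).re| ≤ 22 / 800 * l ∧
        |(ctr ij).im - (ctr ij₀).im| ≤ 22 / 800 * l := by
      intro ij hij
      have hnot : ¬ (∀ p ∈ square (ctr ij₀) (l / 400), ∀ q ∈ square (ctr ij) (l / 400),
          (1 / 40 : ℝ) * l ≤ dist p q) := by
        intro hdd
        exact h ⟨ctr ij₀, l / 400, ctr ij, l / 400, hsub ij₀, hsub ij, hdd,
          by linarith, by linarith, (hHeavyP ij₀).mp hij₀, (hHeavyP ij).mp hij⟩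
      push_neg at hnot
      obtain ⟨p, hp, q, hq, hpq⟩ := hnot
      constructor
      · linarith [abs_sub_le (ctr ij).re q.re (ctr ij₀).re,
          abs_sub_le q.re p.re (ctr ij₀).re, abs_re_sub_le_dist' p q,
          hp.1, hq.1, abs_sub_comm p.re q.re, abs_sub_comm q.re (ctr ij).re,
          abs_sub_comm p.re (ctr ij₀).re]
      · linarith [abs_sub_le (ctr ij).im q.im (ctr ij₀).im,
          abs_sub_le q.im p.im (ctr ij₀).im, abs_im_sub_le_dist' p q,
          hp.2, hq.2, abs_sub_comm p.im q.im, abs_sub_comm q.im (ctr ij).im,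
          abs_sub_comm p.im (ctr ij₀).im]
    obtain ⟨pc, hpc_re, hpc_im⟩ :
        ∃ p : ℂ, p.re = max (c.re - l / 2 + l / 20) (min (ctr ij₀).re (c.re + l / 2 - l / 20)) ∧
          p.im = max (c.im - l / 2 + l / 20) (min (ctr ij₀).im (c.im + l / 2 - l / 20)) :=
      ⟨⟨_, _⟩, rfl, rfl⟩
    have hPQ : square pc (l / 10) ⊆ square c l := by
      intro z hz
      obtain ⟨h1, h2⟩ := hz
      rw [hpc_re] at h1
      rw [hpc_im] at h2
      exact ⟨clamp2 l c.re (ctr ij₀).re z.re hl (by linarith [h1]),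
             clamp2 l c.im (ctr ij₀).im z.im hl (by linarith [h2])⟩
    have hheavyP : ∀ ij, HeavyP ij → square (ctr ij) (l / 400) ⊆ square pc (l / 10) := by
      intro ij hij z hz
      obtain ⟨hd1, hd2⟩ := hdist ij hij
      have hzQ := hsub ij hz
      have hz1 : |z.re - (ctr ij₀).re| ≤ 23 / 800 * l := by
        linarith [abs_sub_le z.re (ctr ij).re (ctr ij₀).re, hz.1, hd1]
      have hz2 : |z.im - (ctr ij₀).im| ≤ 23 / 800 * l := by
        linarith [abs_sub_le z.im (ctr ij).im (ctr ij₀).im, hz.2, hd2]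
      refine ⟨?_, ?_⟩
      · rw [hpc_re]
        have := clamp1 l (ctr ij₀).re c.re z.re hl hz1 hzQ.1
        linarith [this]
      · rw [hpc_im]
        have := clamp1 l (ctr ij₀).im c.im z.im hl hz2 hzQ.2
        linarith [this]
    have hcover : square c l ⊆ square pc (l / 10) ∪ ⋃ ij ∈ (Finset.univ.filter fun ij => ¬ HeavyP ij), square (ctr ij) (l / 400) := by
      intro z hz
      obtain ⟨ij, hij⟩ := hcov z hz
      by_cases hh : HeavyP ij
      · exact Or.inl (hheavyP ij hh hij)
      · exact Or.inr (Set.mem_biUnion (Finset.mem_filter.2 ⟨Finset.mem_univ _, hh⟩) hij)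
    have hμ : μ (square c l) ≤ μ (square pc (l / 10)) +
        ENNReal.ofReal (160000 * b) * μ (square c l) :=
      calc μ (square c l) ≤ μ (square pc (l / 10) ∪ ⋃ ij ∈ (Finset.univ.filter fun ij => ¬ HeavyP ij), square (ctr ij) (l / 400)) :=
            measure_mono hcover
        _ ≤ μ (square pc (l / 10)) + μ (⋃ ij ∈ (Finset.univ.filter fun ij => ¬ HeavyP ij), square (ctr ij) (l / 400)) :=
            measure_union_le _ _
        _ ≤ _ := add_le_add_right hlight _
    exact ⟨pc, l / 10, hPQ, le_refl _,
      cancelE _ _ b hb hb2 (measure_ne_top μ _) hμ⟩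
  · push_neg at hH
    have hcover : square c l ⊆ square c (l / 10) ∪ ⋃ ij ∈ (Finset.univ.filter fun ij => ¬ HeavyP ij), square (ctr ij) (l / 400) := by
      intro z hz
      obtain ⟨ij, hij⟩ := hcov z hz
      exact Or.inr (Set.mem_biUnion (Finset.mem_filter.2 ⟨Finset.mem_univ _, hH ij⟩) hij)
    have hμ : μ (square c l) ≤ μ (square c (l / 10)) +
        ENNReal.ofReal (160000 * b) * μ (square c l) :=
      calc μ (square c l) ≤ μ (square c (l / 10) ∪ ⋃ ij ∈ (Finset.univ.filter fun ij => ¬ HeavyP ij), square (ctr ij) (l / 400)) :=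
            measure_mono hcover
        _ ≤ μ (square c (l / 10)) + μ (⋃ ij ∈ (Finset.univ.filter fun ij => ¬ HeavyP ij), square (ctr ij) (l / 400)) :=
            measure_union_le _ _
        _ ≤ _ := add_le_add_right hlight _
    exact ⟨c, l / 10, htriv, le_refl _,
      cancelE _ _ b hb hb2 (measure_ne_top μ _) hμ⟩
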